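/- Let ρ be a qubit density matrix with Bloch vector r = (r_x, r_y, r_z) ∈ ℝ³, |r|² = r_x² + r_y² + r_z² ≤ 1, i.e. ρ = (1/2)·[[1 + r_z, r_x − i r_y], [r_x + i r_y, 1 − r_z]]. Then M_Re(ρ) = 1 − √( ( √((1 − |r|²)(1 − |r|² + r_y²)) + 1 + |r|² − r_y² ) / 2 ). -/

import Mathlib

open Matrix Complex ComplexOrder Classical

/-- The positive semidefinite square root of a matrix (junk value `0` if not PSD). -/
noncomputable def psqrt {n : Type*} [Fintype n] [DecidableEq n] (A : Matrix n n ℂ) :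
    Matrix n n ℂ :=
  if h : A.PosSemidef then
    (h.1.eigenvectorUnitary : Matrix n n ℂ) * diagonal ((↑) ∘ (Real.sqrt ∘ h.1.eigenvalues)) *
      (star h.1.eigenvectorUnitary : Matrix n n ℂ)
  else 0

/-- Entrywise complex conjugate of a matrix. -/
def mconj {m n : Type*} (A : Matrix m n ℂ) : Matrix m n ℂ := A.map (starRingEnd ℂ)

/-- Fidelity `F(ρ,σ) = Tr √(√ρ σ √ρ)`. -/
noncomputable def fidelity {n : Type*} [Fintype n] [DecidableEq n] (ρ σ : Matrix n n ℂ) : ℝ :=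
  ((psqrt (psqrt ρ * σ * psqrt ρ)).trace).re

/-- The real part state `Re(ρ) = (ρ + ρ*)/2`. -/
noncomputable def reState {n : Type*} (ρ : Matrix n n ℂ) : Matrix n n ℂ :=
  ((1 : ℂ)/2) • (ρ + mconj ρ)

/-- The imaginarity measure `M_Re(ρ) = 1 - F(ρ, Re(ρ))`. -/
noncomputable def MRe {n : Type*} [Fintype n] [DecidableEq n] (ρ : Matrix n n ℂ) : ℝ :=
  1 - fidelity ρ (reState ρ)

/-- A density matrix: positive semidefinite with trace 1. -/
def IsDensityMatrix {n : Type*} [Fintype n] (ρ : Matrix n n ℂ) : Prop :=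
  ρ.PosSemidef ∧ ρ.trace = 1

open scoped MatrixOrder in
lemma psqrt_eq_sqrt {n : Type*} [Fintype n] [DecidableEq n] {A : Matrix n n ℂ}
    (h : A.PosSemidef) : psqrt A = CFC.sqrt A := by
  rw [CFC.sqrt_eq_cfc, cfc_nnreal_eq_real _ A h.nonneg, h.1.cfc_eq, psqrt, dif_pos h]
  simp only [IsHermitian.cfc, Unitary.conjStarAlgAut_apply]
  congr
  funext i
  simp only [Function.comp_apply, Real.coe_sqrt, Real.coe_toNNReal']
  rcases le_total 0 i with hi | hi
  · rw [max_eq_left hi]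
  · rw [max_eq_right hi, Real.sqrt_zero, Real.sqrt_eq_zero'.mpr hi]

open scoped MatrixOrder in
lemma psqrt_mul_self {n : Type*} [Fintype n] [DecidableEq n] {A : Matrix n n ℂ}
    (h : A.PosSemidef) : psqrt A * psqrt A = A := by
  rw [psqrt_eq_sqrt h]
  exact CFC.sqrt_mul_sqrt_self A h.nonneg

open scoped MatrixOrder in
lemma psqrt_psd {n : Type*} [Fintype n] [DecidableEq n] {A : Matrix n n ℂ}
    (h : A.PosSemidef) : (psqrt A).PosSemidef := by
  rw [psqrt_eq_sqrt h]
  exact (CFC.sqrt_nonneg A).posSemidef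

open scoped MatrixOrder in
lemma eq_psqrt {n : Type*} [Fintype n] [DecidableEq n] {A B : Matrix n n ℂ}
    (hB : B.PosSemidef) (h : A.PosSemidef) (hsq : B ^ 2 = A) : B = psqrt A := by
  rw [psqrt_eq_sqrt h]
  exact (CFC.sqrt_unique (by rw [← pow_two]; exact hsq) hB.nonneg).symm

lemma psd_smul {n : Type*} [Fintype n] {A : Matrix n n ℂ} (hA : A.PosSemidef) {r : ℝ}
    (hr : 0 ≤ r) : ((r : ℂ) • A).PosSemidef := by
  refine Matrix.PosSemidef.of_dotProduct_mulVec_nonneg ?_ ?_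
  · have : star (r : ℂ) = (r : ℂ) := by simp [Complex.star_def, Complex.conj_ofReal]
    rw [Matrix.IsHermitian, conjTranspose_smul, hA.1.eq, this]
  · intro x
    rw [smul_mulVec, dotProduct_smul, smul_eq_mul]
    exact mul_nonneg (Complex.zero_le_real.mpr hr) (hA.dotProduct_mulVec_nonneg x)

lemma ch2 (M : Matrix (Fin 2) (Fin 2) ℂ) :
    M * M = M.trace • M - M.det • (1 : Matrix (Fin 2) (Fin 2) ℂ) := by
  ext i j
  fin_cases i <;> fin_cases j <;>
    simp [Matrix.mul_apply, Fin.sum_univ_two, Matrix.trace_fin_two, Matrix.det_fin_two,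
      Matrix.one_apply, smul_eq_mul] <;> ring

lemma trace_psqrt_fin_two {M : Matrix (Fin 2) (Fin 2) ℂ} (hM : M.PosSemidef)
    {t d : ℝ} (ht : M.trace = (t : ℂ)) (hd : M.det = (d : ℂ)) (hd0 : 0 ≤ d)
    (hs : 0 < t + 2 * Real.sqrt d) :
    (psqrt M).trace = (Real.sqrt (t + 2 * Real.sqrt d) : ℂ) := by
  set s : ℝ := Real.sqrt (t + 2 * Real.sqrt d) with hsdef
  have hspos : 0 < s := Real.sqrt_pos.mpr hs
  have hs2 : s ^ 2 = t + 2 * Real.sqrt d := Real.sq_sqrt hs.le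
  set c : ℂ := ((Real.sqrt d : ℝ) : ℂ) with hcdef
  have hc2 : c * c = (d : ℂ) := by
    rw [hcdef, ← Complex.ofReal_mul, Real.mul_self_sqrt hd0]
  set B : Matrix (Fin 2) (Fin 2) ℂ := ((s : ℂ))⁻¹ • (M + c • 1) with hBdef
  have hch : M * M = (t : ℂ) • M - (d : ℂ) • 1 := by rw [ch2 M, ht, hd]
  have hss2 : ((s : ℝ) : ℂ) * ((s : ℝ) : ℂ) = (t : ℂ) + 2 * c := by
    rw [hcdef]
    exact_mod_cast (by nlinarith [hs2] : s * s = t + 2 * Real.sqrt d)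
  have hexp : (M + c • 1) * (M + c • 1) = ((t : ℂ) + 2 * c) • M := by
    rw [add_mul, mul_add, mul_add]
    simp only [smul_mul_assoc, mul_smul_comm, one_mul, mul_one, smul_smul, hch, hc2]
    module
  have hBsq : B ^ 2 = M := by
    rw [pow_two, hBdef, smul_mul_smul_comm, hexp, smul_smul]
    have hsne : ((s : ℝ) : ℂ) ≠ 0 := by exact_mod_cast hspos.ne'
    have : ((s : ℝ) : ℂ)⁻¹ * ((s : ℝ) : ℂ)⁻¹ * ((t : ℂ) + 2 * c) = 1 := by
      rw [← hss2]
      field_simp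
    rw [this, one_smul]
  have hBpsd : B.PosSemidef := by
    have h1 : (c • (1 : Matrix (Fin 2) (Fin 2) ℂ)).PosSemidef :=
      psd_smul Matrix.PosSemidef.one (Real.sqrt_nonneg d)
    have h2 : (M + c • 1).PosSemidef := hM.add h1
    have := psd_smul h2 (inv_nonneg.mpr hspos.le)
    rwa [Complex.ofReal_inv] at this
  have hBeq : B = psqrt M := eq_psqrt hBpsd hM hBsq
  rw [← hBeq, hBdef, trace_smul, trace_add, trace_smul, ht, trace_one]
  simp only [smul_eq_mul]
  have hsne : ((s : ℝ) : ℂ) ≠ 0 := by exact_mod_cast hspos.ne'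
  simp only [Fintype.card_fin, Nat.cast_ofNat]
  rw [show (t : ℂ) + c * 2 = ((s : ℝ) : ℂ) * ((s : ℝ) : ℂ) by rw [hss2]; ring]
  field_simp


lemma cs_aux (a b c X Y Z N : ℝ) (h : a^2 + b^2 + c^2 ≤ 1)
    (hXYZ : X^2 + Y^2 + Z^2 = N^2) (hN0 : 0 ≤ N) : 0 ≤ N + (a*X + b*Y + c*Z) := by
  have hS2 : (a*X + b*Y + c*Z)^2 ≤ N^2 := by
    nlinarith [sq_nonneg (a*Y - b*X), sq_nonneg (a*Z - c*X), sq_nonneg (b*Z - c*Y),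
      sq_nonneg N, h, hXYZ]
  nlinarith [hS2, hN0, sq_nonneg (N + (a*X + b*Y + c*Z))]

lemma quad_nonneg (a b c p q s t : ℝ) (h : a^2 + b^2 + c^2 ≤ 1) :
    0 ≤ (1+c)*(p^2+q^2) + (1-c)*(s^2+t^2) + 2*a*(p*s+q*t) + 2*b*(p*t-q*s) := by
  have hfin := cs_aux a b c (2*(p*s+q*t)) (2*(p*t-q*s)) (p^2+q^2-s^2-t^2) (p^2+q^2+s^2+t^2)
    h (by ring) (by positivity)
  nlinarith [hfin]

lemma bloch_psd (a b c : ℝ) (h : a^2 + b^2 + c^2 ≤ 1) :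
    (((1:ℂ)/2) • !![1 + (c:ℂ), (a:ℂ) - Complex.I * (b:ℂ); (a:ℂ) + Complex.I * (b:ℂ), 1 - (c:ℂ)] : Matrix (Fin 2) (Fin 2) ℂ).PosSemidef := by
  set A : Matrix (Fin 2) (Fin 2) ℂ :=
    !![1 + (c:ℂ), (a:ℂ) - Complex.I * (b:ℂ); (a:ℂ) + Complex.I * (b:ℂ), 1 - (c:ℂ)] with hA
  refine Matrix.PosSemidef.of_dotProduct_mulVec_nonneg ?_ ?_
  · rw [Matrix.IsHermitian]
    ext i j
    fin_cases i <;> fin_cases j <;>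
      simp [hA, Matrix.conjTranspose_apply, Complex.ext_iff]
  · intro x
    have key : star x ⬝ᵥ (A *ᵥ x) =
        (((1+c)*((x 0).re^2+(x 0).im^2) + (1-c)*((x 1).re^2+(x 1).im^2)
          + 2*a*((x 0).re*(x 1).re+(x 0).im*(x 1).im)
          + 2*b*((x 0).re*(x 1).im-(x 0).im*(x 1).re) : ℝ) : ℂ) := by
      rw [hA]
      apply Complex.ext <;>
        simp [dotProduct, mulVec, Fin.sum_univ_two, Complex.add_re, Complex.add_im,
          Complex.mul_re, Complex.mul_im, Complex.sub_re, Complex.sub_im, pow_two] <;> ring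
    rw [smul_mulVec, dotProduct_smul, smul_eq_mul, key]
    have hQ := quad_nonneg a b c (x 0).re (x 0).im (x 1).re (x 1).im h
    have hhalf : ((1:ℂ)/2) * (((1+c)*((x 0).re^2+(x 0).im^2) + (1-c)*((x 1).re^2+(x 1).im^2)
          + 2*a*((x 0).re*(x 1).re+(x 0).im*(x 1).im)
          + 2*b*((x 0).re*(x 1).im-(x 0).im*(x 1).re) : ℝ) : ℂ)
        = ((((1+c)*((x 0).re^2+(x 0).im^2) + (1-c)*((x 1).re^2+(x 1).im^2)
          + 2*a*((x 0).re*(x 1).re+(x 0).im*(x 1).im)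
          + 2*b*((x 0).re*(x 1).im-(x 0).im*(x 1).re))/2 : ℝ) : ℂ) := by
      push_cast; ring
    rw [hhalf]
    exact Complex.zero_le_real.mpr (by linarith)

theorem stmt6 (rx ry rz : ℝ) (hr : rx ^ 2 + ry ^ 2 + rz ^ 2 ≤ 1) :
    MRe (((1:ℂ)/2) • !![1 + (rz:ℂ), (rx:ℂ) - Complex.I * (ry:ℂ); (rx:ℂ) + Complex.I * (ry:ℂ), 1 - (rz:ℂ)] : Matrix (Fin 2) (Fin 2) ℂ) =
      1 - Real.sqrt ((Real.sqrt ((1 - (rx ^ 2 + ry ^ 2 + rz ^ 2)) *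
          (1 - (rx ^ 2 + ry ^ 2 + rz ^ 2) + ry ^ 2)) +
        1 + (rx ^ 2 + ry ^ 2 + rz ^ 2) - ry ^ 2) / 2) := by
  set ρ : Matrix (Fin 2) (Fin 2) ℂ :=
    ((1:ℂ)/2) • !![1 + (rz:ℂ), (rx:ℂ) - Complex.I * (ry:ℂ); (rx:ℂ) + Complex.I * (ry:ℂ), 1 - (rz:ℂ)] with hρdef
  have hρ : ρ.PosSemidef := bloch_psd rx ry rz hr
  have hσeq : reState ρ = ((1:ℂ)/2) • !![1 + (rz:ℂ), (rx:ℂ); (rx:ℂ), 1 - (rz:ℂ)] := by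
    ext i j
    fin_cases i <;> fin_cases j <;>
      simp [hρdef, reState, mconj, Matrix.map_apply, Complex.ext_iff] <;> ring
  have hσ : (reState ρ).PosSemidef := by
    rw [hσeq]
    have := bloch_psd rx 0 rz (by nlinarith [sq_nonneg ry])
    simpa using this
  set S : Matrix (Fin 2) (Fin 2) ℂ := psqrt ρ with hSdef
  have hSS : S * S = ρ := psqrt_mul_self hρ
  have hSH : Sᴴ = S := (psqrt_psd hρ).1
  have hM : (S * reState ρ * S).PosSemidef := by
    have := hσ.conjTranspose_mul_mul_same S
    rwa [hSH] at this
  have hρdet : ρ.det = (((1 - (rx^2+ry^2+rz^2))/4 : ℝ) : ℂ) := by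
    rw [hρdef]
    apply Complex.ext <;>
      simp [Matrix.det_fin_two, Complex.add_re, Complex.add_im, Complex.mul_re, Complex.mul_im,
        Complex.sub_re, Complex.sub_im, pow_two] <;> ring
  have hσdet : (reState ρ).det = (((1 - (rx^2+rz^2))/4 : ℝ) : ℂ) := by
    rw [hσeq]
    apply Complex.ext <;>
      simp [Matrix.det_fin_two, Complex.add_re, Complex.add_im, Complex.mul_re, Complex.mul_im,
        Complex.sub_re, Complex.sub_im, pow_two] <;> ring
  have htr : (S * reState ρ * S).trace = (((1 + rx^2 + rz^2)/2 : ℝ) : ℂ) := by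
    rw [Matrix.trace_mul_cycle, hSS, hσeq, hρdef]
    apply Complex.ext <;>
      simp [Matrix.trace_fin_two, Matrix.mul_apply, Fin.sum_univ_two, Complex.add_re,
        Complex.add_im, Complex.mul_re, Complex.mul_im, Complex.sub_re, Complex.sub_im,
        pow_two] <;> ring
  have hdet : (S * reState ρ * S).det =
      (((1 - (rx^2+ry^2+rz^2)) * (1 - (rx^2+ry^2+rz^2) + ry^2) / 16 : ℝ) : ℂ) := by
    have : (S * reState ρ * S).det = (S * S).det * (reState ρ).det := by
      rw [Matrix.det_mul, Matrix.det_mul, Matrix.det_mul]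
      ring
    rw [this, hSS, hρdet, hσdet]
    push_cast
    ring
  have hd0 : 0 ≤ (1 - (rx^2+ry^2+rz^2)) * (1 - (rx^2+ry^2+rz^2) + ry^2) / 16 :=
    div_nonneg (mul_nonneg (by linarith) (by nlinarith [sq_nonneg ry])) (by norm_num)
  have hs : 0 < (1 + rx^2 + rz^2)/2 +
      2 * Real.sqrt ((1 - (rx^2+ry^2+rz^2)) * (1 - (rx^2+ry^2+rz^2) + ry^2) / 16) := by
    have h1 : 0 < (1 + rx^2 + rz^2)/2 := by positivity
    have h2 := Real.sqrt_nonneg ((1 - (rx^2+ry^2+rz^2)) * (1 - (rx^2+ry^2+rz^2) + ry^2) / 16)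
    linarith
  have hkey := trace_psqrt_fin_two hM htr hdet hd0 hs
  rw [MRe, fidelity, ← hSdef, hkey, Complex.ofReal_re]
  congr 2
  have hD0 : 0 ≤ (1 - (rx^2+ry^2+rz^2)) * (1 - (rx^2+ry^2+rz^2) + ry^2) :=
    mul_nonneg (by linarith) (by nlinarith [sq_nonneg ry])
  have h4 : Real.sqrt ((1 - (rx^2+ry^2+rz^2)) * (1 - (rx^2+ry^2+rz^2) + ry^2) / 16) =
      Real.sqrt ((1 - (rx^2+ry^2+rz^2)) * (1 - (rx^2+ry^2+rz^2) + ry^2)) * (4:ℝ)⁻¹ := by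
    rw [show (1 - (rx^2+ry^2+rz^2)) * (1 - (rx^2+ry^2+rz^2) + ry^2) / 16 =
        ((1 - (rx^2+ry^2+rz^2)) * (1 - (rx^2+ry^2+rz^2) + ry^2)) * ((4:ℝ)⁻¹)^2 by ring,
      Real.sqrt_mul hD0, Real.sqrt_sq (by norm_num : (0:ℝ) ≤ (4:ℝ)⁻¹)]
  rw [h4]
  ring
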